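/- arXiv:2307.00679 — 2 statements merged into one kernel-verified Lean document; each statement's English description precedes it below -/
import Mathlib

section
/- Let X be a complex Banach space, U ⊂ X open, and f_n : U → ℂ holomorphic functions such that for each compact K ⊂ U there is M_K > 0 with sup_{z∈K} |f_n(z)| ≤ M_K for all n. Then the map F : U → ℓ∞ given by F(z) = (f_n(z))_{n∈ℕ} is holomorphic. -/
open Set

open Metric

instance : Fact ((1 : ENNReal) ≤ ⊤) := ⟨le_top⟩

-- coefficient bound
lemma cauchy_coeff_bound {φ : ℂ → ℂ} {R M : ℝ} (hR : 0 < R)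
    (hM : ∀ t ∈ Metric.closedBall (0:ℂ) R, ‖φ t‖ ≤ M) (n : ℕ) :
    ‖cauchyPowerSeries φ 0 R n‖ ≤ M / R ^ n := by
  have hRa : |R| = R := abs_of_pos hR
  have hint : (∫ θ : ℝ in (0)..2 * Real.pi, ‖φ (circleMap 0 R θ)‖) ≤ 2 * Real.pi * M := by
    have : ‖∫ θ : ℝ in (0)..2 * Real.pi, ‖φ (circleMap 0 R θ)‖‖ ≤ M * |2 * Real.pi - 0| := by
      apply intervalIntegral.norm_integral_le_of_norm_le_const
      intro θ _
      rw [norm_norm]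
      exact hM _ (circleMap_mem_closedBall 0 hR.le θ)
    calc (∫ θ : ℝ in (0)..2 * Real.pi, ‖φ (circleMap 0 R θ)‖)
        ≤ ‖∫ θ : ℝ in (0)..2 * Real.pi, ‖φ (circleMap 0 R θ)‖‖ := le_abs_self _
      _ ≤ M * |2 * Real.pi - 0| := this
      _ = 2 * Real.pi * M := by
          rw [sub_zero, abs_of_pos Real.two_pi_pos]; ring
  calc ‖cauchyPowerSeries φ 0 R n‖
      ≤ ((2 * Real.pi)⁻¹ * ∫ θ : ℝ in (0)..2 * Real.pi, ‖φ (circleMap 0 R θ)‖) * |R|⁻¹ ^ n :=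
        norm_cauchyPowerSeries_le _ _ _ _
    _ ≤ ((2 * Real.pi)⁻¹ * (2 * Real.pi * M)) * |R|⁻¹ ^ n := by
        gcongr
    _ = M / R ^ n := by
        rw [inv_mul_cancel_left₀ Real.two_pi_pos.ne', hRa, inv_pow, div_eq_mul_inv]

lemma cauchy_deriv_bound {φ : ℂ → ℂ} {R M : ℝ} (hR : 0 < R)
    (hd : DifferentiableOn ℂ φ (Metric.closedBall 0 R))
    (hM : ∀ t ∈ Metric.closedBall (0:ℂ) R, ‖φ t‖ ≤ M) :
    ‖deriv φ 0‖ ≤ M / R := by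
  set R' : NNReal := ⟨R, hR.le⟩ with hR'
  have hcoe : (R' : ℝ) = R := rfl
  have hd' : DifferentiableOn ℂ φ (Metric.closedBall 0 (R' : ℝ)) := by rwa [hcoe]
  have hp : HasFPowerSeriesOnBall φ (cauchyPowerSeries φ 0 R') 0 R' :=
    hd'.hasFPowerSeriesOnBall hR
  have hder : deriv φ 0 = cauchyPowerSeries φ 0 R' 1 fun _ => (1:ℂ) :=
    hp.hasFPowerSeriesAt.deriv
  rw [hder, hcoe]
  have h1 : ‖cauchyPowerSeries φ 0 R 1 fun _ => (1:ℂ)‖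
      ≤ ‖cauchyPowerSeries φ 0 R 1‖ * ∏ _i : Fin 1, ‖(1:ℂ)‖ :=
    (cauchyPowerSeries φ 0 R 1).le_opNorm _
  simp only [norm_one, Finset.prod_const, one_pow, mul_one] at h1
  exact h1.trans (by simpa using cauchy_coeff_bound hR hM 1)

lemma cauchy_taylor_bound {φ : ℂ → ℂ} {R M : ℝ} (hR : 1 < R)
    (hd : DifferentiableOn ℂ φ (Metric.closedBall 0 R))
    (hM : ∀ t ∈ Metric.closedBall (0:ℂ) R, ‖φ t‖ ≤ M) :
    ‖φ 1 - φ 0 - deriv φ 0‖ ≤ M / (R * (R - 1)) := by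
  have hR0 : (0:ℝ) < R := by linarith
  have hM0 : 0 ≤ M := le_trans (norm_nonneg _) (hM 0 (by simp [hR0.le]))
  set R' : NNReal := ⟨R, hR0.le⟩ with hR'
  have hcoe : (R' : ℝ) = R := rfl
  have hd' : DifferentiableOn ℂ φ (Metric.closedBall 0 (R' : ℝ)) := by rwa [hcoe]
  set p := cauchyPowerSeries φ 0 R with hpdef
  have hp : HasFPowerSeriesOnBall φ p 0 R' := hd'.hasFPowerSeriesOnBall hR0
  set g : ℕ → ℂ := fun n => p n fun _ => (1:ℂ) with hg
  have hmem : (1:ℂ) ∈ Metric.eball (0:ℂ) (R' : ENNReal) := by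
    rw [mem_emetric_ball_zero_iff]
    have : ‖(1:ℂ)‖ₑ = 1 := by simp
    rw [this]
    exact_mod_cast (show (1:NNReal) < R' by exact_mod_cast hR)
  have hsum : HasSum g (φ 1) := by
    have := hp.hasSum hmem
    simpa only [zero_add] using this
  have hb : ∀ n, ‖g n‖ ≤ M / R ^ n := by
    intro n
    calc ‖g n‖ ≤ ‖p n‖ * ∏ _i : Fin n, ‖(1:ℂ)‖ := (p n).le_opNorm _
      _ = ‖p n‖ := by simp
      _ ≤ M / R ^ n := cauchy_coeff_bound hR0 hM n
  -- geometric bound series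
  have hRinv : (0:ℝ) ≤ R⁻¹ := by positivity
  have hRinv1 : R⁻¹ < 1 := inv_lt_one_of_one_lt₀ hR
  have hgeom : Summable fun n : ℕ => (R⁻¹) ^ n := summable_geometric_of_lt_one hRinv hRinv1
  have hbs : Summable fun n : ℕ => M / R ^ (n + 2) := by
    have : (fun n : ℕ => M / R ^ (n + 2)) = fun n : ℕ => (M / R ^ 2) * (R⁻¹) ^ n := by
      funext n
      rw [pow_add, div_eq_mul_inv, mul_inv, inv_pow, div_eq_mul_inv]
      ring
    rw [this]
    exact hgeom.mul_left _
  have hbsum : HasSum (fun n : ℕ => M / R ^ (n + 2)) (M / (R * (R - 1))) := by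
    have h1 : (fun n : ℕ => M / R ^ (n + 2)) = fun n : ℕ => (M / R ^ 2) * (R⁻¹) ^ n := by
      funext n
      rw [pow_add, div_eq_mul_inv, mul_inv, inv_pow, div_eq_mul_inv]
      ring
    have h2 : HasSum (fun n : ℕ => (M / R ^ 2) * (R⁻¹) ^ n) ((M / R ^ 2) * (1 - R⁻¹)⁻¹) :=
      (hasSum_geometric_of_lt_one hRinv hRinv1).mul_left _
    rw [h1]
    convert h2 using 1
    have hRne : R ≠ 0 := hR0.ne'
    have h3 : (1 - R⁻¹) = (R - 1) / R := by field_simp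
    have hR1 : R - 1 ≠ 0 := by intro h; rw [sub_eq_zero] at h; exact hR.ne' h
    rw [h3, inv_div, div_mul_div_comm]
    rw [div_eq_div_iff (by positivity) (by positivity)]
    ring
  have htail : ‖∑' n : ℕ, g (n + 2)‖ ≤ M / (R * (R - 1)) :=
    tsum_of_norm_bounded hbsum fun n => hb (n + 2)
  have hs : Summable g := hsum.summable
  have hsplit : (∑ i ∈ Finset.range 2, g i) + ∑' n : ℕ, g (n + 2) = ∑' n, g n :=
    Summable.sum_add_tsum_nat_add 2 hs
  have htsum : ∑' n, g n = φ 1 := hsum.tsum_eq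
  have hg0 : g 0 = φ 0 := hp.coeff_zero _
  have hg1 : g 1 = deriv φ 0 := (hp.hasFPowerSeriesAt.deriv).symm
  have hrange : (∑ i ∈ Finset.range 2, g i) = g 0 + g 1 := by
    rw [Finset.sum_range_succ, Finset.sum_range_one]
  have key : φ 1 - φ 0 - deriv φ 0 = ∑' n : ℕ, g (n + 2) := by
    rw [← hg0, ← hg1]
    have := hsplit
    rw [hrange, htsum] at this
    linear_combination -this
  rw [key]
  exact htail

/-- If `f_n : U → ℂ` are holomorphic functions on an open subset of a complex Banach space
which are uniformly bounded on each compact subset of `U`, then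
`F(z) = (f_n(z))_n` is a holomorphic map `U → ℓ∞`. -/
theorem holomorphic_into_linfty
    {X : Type*} [NormedAddCommGroup X] [NormedSpace ℂ X] [CompleteSpace X]
    (U : Set X) (hU : IsOpen U)
    (f : ℕ → X → ℂ) (hf : ∀ n, DifferentiableOn ℂ (f n) U)
    (hbdd : ∀ K ⊆ U, IsCompact K → ∃ M > 0, ∀ n : ℕ, ∀ z ∈ K, ‖f n z‖ ≤ M)
    (F : X → lp (fun _ : ℕ => ℂ) ⊤)
    (hF : ∀ z ∈ U, ∀ n : ℕ, (F z : ∀ _ : ℕ, ℂ) n = f n z) :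
    DifferentiableOn ℂ F U := by
  suffices H : ∀ z₀ ∈ U, DifferentiableAt ℂ F z₀ by
    exact fun z hz => (H z hz).differentiableWithinAt
  intro z₀ hz₀
  -- Step 0: a closed ball inside U
  obtain ⟨r₀, hr₀pos, hr₀U⟩ : ∃ r₀ > 0, Metric.closedBall z₀ r₀ ⊆ U := by
    rcases Metric.nhds_basis_closedBall.mem_iff.1 (hU.mem_nhds hz₀) with ⟨r₀, h1, h2⟩
    exact ⟨r₀, h1, h2⟩
  -- Step 1: local uniform bound on a closed ball
  obtain ⟨r, hrpos, hrU, M, hMpos, hM⟩ :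
      ∃ r > 0, Metric.closedBall z₀ r ⊆ U ∧
        ∃ M > 0, ∀ n : ℕ, ∀ w ∈ Metric.closedBall z₀ r, ‖f n w‖ ≤ M := by
    by_contra hcon
    push_neg at hcon
    have hsel : ∀ j : ℕ, ∃ n : ℕ, ∃ w ∈ Metric.closedBall z₀ (r₀ / (j + 1)),
        (j : ℝ) + 1 < ‖f n w‖ := by
      intro j
      have hpos : (0:ℝ) < r₀ / (j + 1) := by positivity
      have hsub : Metric.closedBall z₀ (r₀ / (j + 1)) ⊆ U := by
        refine (Metric.closedBall_subset_closedBall ?_).trans hr₀U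
        exact div_le_self hr₀pos.le (by exact_mod_cast Nat.one_le_iff_ne_zero.mpr (by simp))
      have := hcon (r₀ / (j + 1)) hpos hsub ((j : ℝ) + 1) (by positivity)
      exact this
    choose n w hw hgt using hsel
    have htend : Filter.Tendsto w Filter.atTop (nhds z₀) := by
      rw [tendsto_iff_dist_tendsto_zero]
      refine squeeze_zero (fun j => dist_nonneg) (fun j => Metric.mem_closedBall.1 (hw j)) ?_
      have h1 : Filter.Tendsto (fun j : ℕ => r₀ / (j : ℝ)) Filter.atTop (nhds 0) :=
        tendsto_const_div_atTop_nhds_zero_nat r₀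
      have h2 := (Filter.tendsto_add_atTop_iff_nat 1).2 h1
      convert h2 using 2 with j
      push_cast
      ring
    have hK : IsCompact (insert z₀ (Set.range w)) := htend.isCompact_insert_range
    have hKU : insert z₀ (Set.range w) ⊆ U := by
      refine insert_subset hz₀ ?_
      rintro _ ⟨j, rfl⟩
      apply hr₀U
      refine Metric.closedBall_subset_closedBall ?_ (hw j)
      exact div_le_self hr₀pos.le (by exact_mod_cast Nat.one_le_iff_ne_zero.mpr (by simp))
    obtain ⟨C, hCpos, hC⟩ := hbdd _ hKU hK
    have hj := hgt ⌈C⌉₊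
    have hle : ‖f (n ⌈C⌉₊) (w ⌈C⌉₊)‖ ≤ C :=
      hC _ _ (mem_insert_of_mem _ (mem_range_self _))
    have : C ≤ (⌈C⌉₊ : ℝ) := Nat.le_ceil C
    linarith
  -- differentiability at z₀ and the candidate derivative components
  have hdiff : ∀ n, DifferentiableAt ℂ (f n) z₀ :=
    fun n => (hf n).differentiableAt (hU.mem_nhds hz₀)
  set ℓ : ℕ → X →L[ℂ] ℂ := fun n => fderiv ℂ (f n) z₀ with hℓ
  have hM0 : (0:ℝ) ≤ M := hMpos.le
  -- the sliced function
  have hslice : ∀ (n : ℕ) (x : X), x ≠ 0 →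
      DifferentiableOn ℂ (fun t : ℂ => f n (z₀ + t • x)) (Metric.closedBall 0 (r / ‖x‖)) ∧
      HasDerivAt (fun t : ℂ => f n (z₀ + t • x)) (ℓ n x) 0 ∧
      ∀ t ∈ Metric.closedBall (0:ℂ) (r / ‖x‖), ‖f n (z₀ + t • x)‖ ≤ M := by
    intro n x hx
    have hxpos : 0 < ‖x‖ := norm_pos_iff.2 hx
    have hmaps : ∀ t ∈ Metric.closedBall (0:ℂ) (r / ‖x‖),
        z₀ + t • x ∈ Metric.closedBall z₀ r := by
      intro t ht
      have ht' : ‖t‖ ≤ r / ‖x‖ := by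
        simpa [Metric.mem_closedBall, dist_zero_right] using ht
      rw [Metric.mem_closedBall, dist_eq_norm, add_sub_cancel_left, norm_smul]
      calc ‖t‖ * ‖x‖ ≤ (r / ‖x‖) * ‖x‖ := mul_le_mul_of_nonneg_right ht' hxpos.le
        _ = r := by field_simp
    have hA : Differentiable ℂ (fun t : ℂ => z₀ + t • x) := by
      apply Differentiable.const_add
      exact fun t => ((hasDerivAt_id t).smul_const x).differentiableAt
    refine ⟨?_, ?_, ?_⟩
    · exact ((hf n).mono hrU).comp hA.differentiableOn (fun t ht => hmaps t ht)
    · have h1 : HasDerivAt (fun t : ℂ => z₀ + t • x) x 0 := by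
        have := ((hasDerivAt_id (0:ℂ)).smul_const x).const_add z₀
        simpa using this
      have h2 : HasFDerivAt (f n) (ℓ n) (z₀ + (0:ℂ) • x) := by
        simpa using (hdiff n).hasFDerivAt
      exact h2.comp_hasDerivAt 0 h1
    · exact fun t ht => hM n _ (hmaps t ht)
  -- bound on the derivative components
  have hℓbound : ∀ (n : ℕ) (x : X), ‖ℓ n x‖ ≤ M / r * ‖x‖ := by
    intro n x
    rcases eq_or_ne x 0 with rfl | hx
    · simp
    have hxpos : 0 < ‖x‖ := norm_pos_iff.2 hx
    have hRpos : 0 < r / ‖x‖ := by positivity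
    obtain ⟨hd, hder, hb⟩ := hslice n x hx
    have := cauchy_deriv_bound hRpos hd hb
    rw [hder.deriv] at this
    calc ‖ℓ n x‖ ≤ M / (r / ‖x‖) := this
      _ = M / r * ‖x‖ := by field_simp
  -- the candidate derivative as a continuous linear map into ℓ∞
  have hmem : ∀ x : X, Memℓp (fun n => ℓ n x) ⊤ := by
    intro x
    apply memℓp_infty
    refine ⟨M / r * ‖x‖, ?_⟩
    rintro _ ⟨n, rfl⟩
    exact hℓbound n x
  set Φ : X →ₗ[ℂ] lp (fun _ : ℕ => ℂ) ⊤ :=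
    { toFun := fun x => ⟨fun n => ℓ n x, hmem x⟩
      map_add' := by
        intro x y
        apply lp.ext
        rw [lp.coeFn_add]
        funext n
        exact (ℓ n).map_add x y
      map_smul' := by
        intro c x
        apply lp.ext
        rw [lp.coeFn_smul]
        funext n
        exact (ℓ n).map_smul c x } with hΦ
  set L : X →L[ℂ] lp (fun _ : ℕ => ℂ) ⊤ :=
    Φ.mkContinuous (M / r) (fun x => by
      apply lp.norm_le_of_forall_le (by positivity)
      intro n
      exact hℓbound n x) with hL
  -- the remainder estimate
  suffices hlo : (fun h : X => F (z₀ + h) - F z₀ - L h) =o[nhds 0] fun h => h by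
    exact (hasFDerivAt_iff_isLittleO_nhds_zero.2 hlo).differentiableAt
  have hbigO : (fun h : X => F (z₀ + h) - F z₀ - L h) =O[nhds 0] fun h => ‖h‖ * ‖h‖ := by
    rw [Asymptotics.isBigO_iff]
    refine ⟨2 * M / (r * r), ?_⟩
    rw [Metric.eventually_nhds_iff]
    refine ⟨r / 2, by positivity, ?_⟩
    intro h hh
    rw [dist_zero_right] at hh
    have hhr : ‖h‖ < r / 2 := hh
    have hzU : z₀ + h ∈ U := by
      apply hrU
      rw [Metric.mem_closedBall, dist_eq_norm, add_sub_cancel_left]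
      linarith
    have hcomp : ∀ n : ℕ,
        ‖f n (z₀ + h) - f n z₀ - ℓ n h‖ ≤ 2 * M / (r * r) * (‖h‖ * ‖h‖) := by
      intro n
      rcases eq_or_ne h 0 with rfl | hne
      · simp
      have hpos : 0 < ‖h‖ := norm_pos_iff.2 hne
      set R : ℝ := r / ‖h‖ with hRdef
      have hR2 : 2 < R := by
        rw [hRdef, lt_div_iff₀ hpos]
        linarith
      have hR1 : 1 < R := by linarith
      obtain ⟨hd, hder, hb⟩ := hslice n h hne
      have hkey := cauchy_taylor_bound hR1 hd hb
      rw [hder.deriv] at hkey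
      simp only [one_smul, zero_smul, add_zero] at hkey
      refine hkey.trans ?_
      have hRhalf : R / 2 ≤ R - 1 := by linarith
      have h1 : M / (R * (R - 1)) ≤ M / (R * (R / 2)) := by
        apply div_le_div_of_nonneg_left hM0 (by positivity)
        apply mul_le_mul_of_nonneg_left hRhalf (by positivity)
      refine h1.trans (le_of_eq ?_)
      rw [hRdef]
      field_simp
    calc ‖F (z₀ + h) - F z₀ - L h‖
        ≤ 2 * M / (r * r) * (‖h‖ * ‖h‖) := by
          apply lp.norm_le_of_forall_le (by positivity)
          intro n
          simp only [lp.coeFn_sub, Pi.sub_apply]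
          rw [hF _ hzU n, hF _ hz₀ n]
          have hLn : (L h : ∀ _ : ℕ, ℂ) n = ℓ n h := rfl
          rw [hLn]
          exact hcomp n
      _ ≤ 2 * M / (r * r) * ‖‖h‖ * ‖h‖‖ := by
          gcongr
          exact le_abs_self _
  refine hbigO.trans_isLittleO ?_
  have := Asymptotics.isLittleO_norm_pow_id (E' := X) (n := 2) one_lt_two
  simpa [pow_two] using this
end

section
/- Let α ∈ ℂ with 0 < |α| < 1, let R > 0, r = |α|R, and ρ = (|α|/2)·min{|α|, 1 − |α|}. For λ ∈ 𝔻 set α̃ = α + ρλ and define φ_λ on the closed annulus {r ≤ |z| ≤ R} by φ_λ(t e^{iθ}) = ( ((R − t)/(R − r))·α̃ + ((t − r)/(R − r))·α )·t e^{iθ}. Then the radial profile s ↦ |α + (1−s)ρλ|·(r + s(R − r)) is strictly increasing on [0,1], and φ_λ is a homeomorphism from the annulus {r ≤ |z| ≤ R} onto the annulus {|α̃|r ≤ |z| ≤ |α|R} which restricts to z ↦ α̃z on |z| = r and to z ↦ αz on |z| = R. -/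
open Set Metric Complex

set_option maxHeartbeats 1000000 in
/-- Quasiconformal interpolation between `z ↦ α̃z` on `|z| = r` and `z ↦ αz` on `|z| = R`:
the radial image profile is strictly increasing, and the interpolating map is a continuous
bijection of the closed annulus `{r ≤ |z| ≤ R}` onto `{|α̃|r ≤ |z| ≤ |α|R}` with the stated
boundary values. -/
theorem annulus_interpolation
    (α : ℂ) (hα0 : 0 < ‖α‖) (hα1 : ‖α‖ < 1)
    (R : ℝ) (hR : 0 < R)
    (r ρ : ℝ) (hr : r = ‖α‖ * R)
    (hρ : ρ = ‖α‖ / 2 * min (‖α‖) (1 - ‖α‖))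
    (l : ℂ) (hl : ‖l‖ < 1)
    (αt : ℂ) (hαt : αt = α + (ρ : ℂ) * l)
    (φ : ℂ → ℂ)
    (hφ : ∀ z : ℂ, φ z =
      ((((R - ‖z‖) / (R - r) : ℝ) : ℂ) * αt +
        (((‖z‖ - r) / (R - r) : ℝ) : ℂ) * α) * z) :
    StrictMonoOn
      (fun s : ℝ => ‖α + (((1 - s) * ρ : ℝ) : ℂ) * l‖ * (r + s * (R - r)))
      (Set.Icc 0 1) ∧
    Set.BijOn φ {z : ℂ | r ≤ ‖z‖ ∧ ‖z‖ ≤ R}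
      {z : ℂ | ‖αt‖ * r ≤ ‖z‖ ∧ ‖z‖ ≤ ‖α‖ * R} ∧
    ContinuousOn φ {z : ℂ | r ≤ ‖z‖ ∧ ‖z‖ ≤ R} ∧
    (∀ z : ℂ, ‖z‖ = r → φ z = αt * z) ∧
    (∀ z : ℂ, ‖z‖ = R → φ z = α * z) := by
  set a := ‖α‖ with ha_def
  have hrR : r < R := by rw [hr]; nlinarith
  have hRr : (0:ℝ) < R - r := sub_pos.2 hrR
  have hRrne : R - r ≠ 0 := hRr.ne'
  have hr0 : 0 < r := by rw [hr]; positivity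
  have hl0 : (0:ℝ) ≤ ‖l‖ := norm_nonneg l
  have hl1 : ‖l‖ ≤ 1 := hl.le
  have hm1 : min a (1 - a) ≤ 1 - a := min_le_right _ _
  have hm0 : 0 < min a (1 - a) := lt_min hα0 (by linarith)
  have hρ0 : 0 < ρ := by rw [hρ]; positivity
  have hρa : ρ ≤ a / 2 := by rw [hρ]; nlinarith
  have hkey : ρ * (2 - a) < a * (1 - a) := by
    rw [hρ]
    nlinarith [mul_pos hα0 (sub_pos.2 hα1), mul_pos hα0 hm0]
  have hclb : ∀ s : ℝ, s ∈ Icc (0:ℝ) 1 →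
      a - ρ ≤ ‖α + (((1 - s) * ρ : ℝ) : ℂ) * l‖ := by
    intro s hs
    have hsn : (0:ℝ) ≤ (1 - s) * ρ := mul_nonneg (by linarith [hs.2]) hρ0.le
    have h1 : ‖(((1 - s) * ρ : ℝ) : ℂ) * l‖ ≤ ρ := by
      rw [norm_mul, Complex.norm_real, Real.norm_of_nonneg hsn]
      nlinarith [hs.1, hs.2]
    have h3 : ‖α‖ ≤ ‖α + (((1 - s) * ρ : ℝ) : ℂ) * l‖
        + ‖(((1 - s) * ρ : ℝ) : ℂ) * l‖ := by
      have := norm_sub_le (α + (((1 - s) * ρ : ℝ) : ℂ) * l) ((((1 - s) * ρ : ℝ) : ℂ) * l)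
      rw [add_sub_cancel_right] at this
      exact this
    linarith
  have hcne : ∀ s : ℝ, s ∈ Icc (0:ℝ) 1 → (α + (((1 - s) * ρ : ℝ) : ℂ) * l) ≠ 0 := by
    intro s hs h0
    have := hclb s hs
    rw [h0, norm_zero] at this
    linarith
  set F : ℝ → ℝ := fun s : ℝ =>
    ‖α + (((1 - s) * ρ : ℝ) : ℂ) * l‖ * (r + s * (R - r)) with hF_def
  have hmono : StrictMonoOn F (Set.Icc 0 1) := by
    intro s1 hs1 s2 hs2 h12
    simp only [hF_def]
    set x1 := ‖α + (((1 - s1) * ρ : ℝ) : ℂ) * l‖ with hx1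
    set x2 := ‖α + (((1 - s2) * ρ : ℝ) : ℂ) * l‖ with hx2
    have hd : 0 < s2 - s1 := sub_pos.2 h12
    have hx2lb : a - ρ ≤ x2 := hclb s2 hs2
    have hdiff : x1 - x2 ≤ (s2 - s1) * ρ := by
      have h4 : x1 - x2 ≤ ‖(α + (((1 - s1) * ρ : ℝ) : ℂ) * l)
          - (α + (((1 - s2) * ρ : ℝ) : ℂ) * l)‖ := by
        have := norm_sub_norm_le (α + (((1 - s1) * ρ : ℝ) : ℂ) * l)
          (α + (((1 - s2) * ρ : ℝ) : ℂ) * l)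
        exact this
      have h5 : (α + (((1 - s1) * ρ : ℝ) : ℂ) * l) - (α + (((1 - s2) * ρ : ℝ) : ℂ) * l)
          = (((s2 - s1) * ρ : ℝ) : ℂ) * l := by push_cast; ring
      rw [h5, norm_mul, Complex.norm_real,
        Real.norm_of_nonneg (mul_nonneg hd.le hρ0.le)] at h4
      nlinarith [mul_le_mul_of_nonneg_left hl1 (mul_nonneg hd.le hρ0.le)]
    have ht1 : r + s1 * (R - r) ≤ R := by nlinarith [hs1.2]
    have ht1' : 0 < r + s1 * (R - r) := by nlinarith [hs1.1]
    have hRr' : R - r = R * (1 - a) := by rw [hr]; ring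
    have hstep : 0 < (s2 - s1) * (R * (a * (1 - a) - ρ * (2 - a))) :=
      mul_pos hd (mul_pos hR (sub_pos.2 hkey))
    have hA : (a - ρ) * ((s2 - s1) * (R - r)) ≤ x2 * ((s2 - s1) * (R - r)) :=
      mul_le_mul_of_nonneg_right hx2lb (mul_pos hd hRr).le
    have hB : (x1 - x2) * (r + s1 * (R - r)) ≤ ((s2 - s1) * ρ) * (r + s1 * (R - r)) :=
      mul_le_mul_of_nonneg_right hdiff ht1'.le
    have hC : ((s2 - s1) * ρ) * (r + s1 * (R - r)) ≤ ((s2 - s1) * ρ) * R :=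
      mul_le_mul_of_nonneg_left ht1 (mul_pos hd hρ0).le
    have hid : (a - ρ) * ((s2 - s1) * (R - r)) - ((s2 - s1) * ρ) * R
        = (s2 - s1) * (R * (a * (1 - a) - ρ * (2 - a))) := by rw [hRr']; ring
    have hid2 : x2 * (r + s2 * (R - r))
        = x2 * (r + s1 * (R - r)) + x2 * ((s2 - s1) * (R - r)) := by ring
    linarith
  -- rewrite of φ via the interpolation coefficient
  have hφc : ∀ z : ℂ, φ z
      = (α + (((1 - (‖z‖ - r) / (R - r)) * ρ : ℝ) : ℂ) * l) * z := by
    intro z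
    have h1 : ((R - ‖z‖) / (R - r) : ℝ) = 1 - (‖z‖ - r) / (R - r) := by
      field_simp
      ring
    rw [hφ z, hαt, h1]
    push_cast
    ring
  have hσmem : ∀ z : ℂ, r ≤ ‖z‖ → ‖z‖ ≤ R →
      (‖z‖ - r) / (R - r) ∈ Icc (0:ℝ) 1 := by
    intro z h1 h2
    constructor
    · exact div_nonneg (by linarith) hRr.le
    · rw [div_le_one hRr]; linarith
  have habsφ : ∀ z : ℂ, r ≤ ‖z‖ → ‖z‖ ≤ R →
      ‖φ z‖ = F ((‖z‖ - r) / (R - r)) := by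
    intro z h1 h2
    rw [hφc z, norm_mul, hF_def]
    simp only
    congr 1
    field_simp
    ring
  have hF0 : F 0 = ‖αt‖ * r := by
    simp only [hF_def, hαt]
    norm_num
  have hF1 : F 1 = a * R := by
    simp only [hF_def]
    norm_num
    exact Or.inl rfl
  refine ⟨hmono, ⟨?_, ?_, ?_⟩, ?_, ?_, ?_⟩
  · -- MapsTo
    intro z hz
    simp only [Set.mem_setOf_eq] at hz ⊢
    have h0 : (0:ℝ) ∈ Icc (0:ℝ) 1 := by norm_num
    have h1 : (1:ℝ) ∈ Icc (0:ℝ) 1 := by norm_num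
    have hσ := hσmem z hz.1 hz.2
    rw [habsφ z hz.1 hz.2]
    constructor
    · rw [← hF0]
      exact hmono.monotoneOn h0 hσ hσ.1
    · rw [← hF1]
      exact hmono.monotoneOn hσ h1 hσ.2
  · -- InjOn
    intro z1 h1 z2 h2 heq
    simp only [Set.mem_setOf_eq] at h1 h2
    have e1 : F ((‖z1‖ - r) / (R - r)) = F ((‖z2‖ - r) / (R - r)) := by
      rw [← habsφ z1 h1.1 h1.2, ← habsφ z2 h2.1 h2.2, heq]
    have hσeq := hmono.injOn (hσmem z1 h1.1 h1.2) (hσmem z2 h2.1 h2.2) e1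
    have habseq : ‖z1‖ = ‖z2‖ := by
      field_simp at hσeq
      linarith
    rw [hφc z1, hφc z2, habseq] at heq
    exact mul_left_cancel₀ (hcne _ (hσmem z2 (habseq ▸ h1.1) (habseq ▸ h1.2))) heq
  · -- SurjOn
    intro w hw
    simp only [Set.mem_setOf_eq] at hw
    have hcont : ContinuousOn F (Icc 0 1) := by
      apply Continuous.continuousOn
      refine Continuous.mul (continuous_norm.comp ?_)
        (continuous_const.add (continuous_id.mul continuous_const))
      exact continuous_const.add
        ((Complex.continuous_ofReal.comp
          ((continuous_const.sub continuous_id).mul continuous_const)).mul continuous_const)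
    have hmem : ‖w‖ ∈ Icc (F 0) (F 1) := by
      rw [hF0, hF1]; exact ⟨hw.1, hw.2⟩
    obtain ⟨s, hs, hFs⟩ := intermediate_value_Icc zero_le_one hcont hmem
    have hcsne : (α + (((1 - s) * ρ : ℝ) : ℂ) * l) ≠ 0 := hcne s hs
    have habsne : ‖α + (((1 - s) * ρ : ℝ) : ℂ) * l‖ ≠ 0 :=
      (norm_pos_iff.2 hcsne).ne'
    set z := w / (α + (((1 - s) * ρ : ℝ) : ℂ) * l) with hz_def
    have habsz : ‖z‖ = r + s * (R - r) := by
      rw [hz_def, norm_div, ← hFs, hF_def]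
      simp only
      rw [mul_comm, mul_div_assoc, div_self habsne, mul_one]
    have hzr : r ≤ ‖z‖ := by
      rw [habsz]
      have := mul_nonneg hs.1 hRr.le
      linarith
    have hzR : ‖z‖ ≤ R := by
      rw [habsz]
      have := mul_le_of_le_one_left hRr.le hs.2
      linarith
    refine ⟨z, ⟨hzr, hzR⟩, ?_⟩
    rw [hφc z]
    have hσz : (‖z‖ - r) / (R - r) = s := by
      rw [habsz]; field_simp
      ring
    rw [hσz, hz_def, mul_comm, div_mul_cancel₀ _ hcsne]
  · -- ContinuousOn
    have hc : Continuous (fun z : ℂ =>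
        ((((R - ‖z‖) / (R - r) : ℝ) : ℂ) * αt +
          (((‖z‖ - r) / (R - r) : ℝ) : ℂ) * α) * z) := by
      have h1 : Continuous fun z : ℂ => (((R - ‖z‖) / (R - r) : ℝ) : ℂ) :=
        Complex.continuous_ofReal.comp
          ((continuous_const.sub continuous_norm).div_const _)
      have h2 : Continuous fun z : ℂ => (((‖z‖ - r) / (R - r) : ℝ) : ℂ) :=
        Complex.continuous_ofReal.comp
          ((continuous_norm.sub continuous_const).div_const _)
      exact ((h1.mul continuous_const).add (h2.mul continuous_const)).mul continuous_id
    exact hc.continuousOn.congr (fun z _ => hφ z)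
  · -- boundary r
    intro z hz
    rw [hφ z, hz]
    rw [show (R - r) / (R - r) = (1:ℝ) from div_self hRrne, sub_self, zero_div]
    push_cast
    ring
  · -- boundary R
    intro z hz
    rw [hφ z, hz]
    rw [show (R - r) / (R - r) = (1:ℝ) from div_self hRrne, sub_self, zero_div]
    push_cast
    ring
end
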